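/- Suppose {Eₙ}_{n∈ℕ} ⊆ 𝔸 is a bounded sequence of essential continua with Eₙ ≺ E_{n+1} for all n ∈ ℕ. Then the sets Eₙ converge in Hausdorff distance to the essential continuum ∂𝒰⁻, where 𝒰⁻ = ⋃_{n∈ℕ} 𝒰⁻(Eₙ). -/

import Mathlib

open Set Topology Filter

noncomputable section

/-- The one-dimensional torus (circle) `𝕋¹ = ℝ/ℤ`. -/
abbrev T1 := AddCircle (1 : ℝ)
/-- The plane `ℝ²`. -/
abbrev R2 := ℝ × ℝ
/-- The two-dimensional torus `𝕋² = ℝ²/ℤ²`. -/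
abbrev T2 := T1 × T1
/-- The open annulus `𝔸 = 𝕋¹ × ℝ`. -/
abbrev Ann := T1 × ℝ

/-- The canonical projection `π : ℝ² → 𝕋²`. -/
def proj : R2 → T2 := fun z => ((z.1 : T1), (z.2 : T1))

/-- The point of `ℝ²` corresponding to an integer vector. -/
def intVec (v : ℤ × ℤ) : R2 := ((v.1 : ℝ), (v.2 : ℝ))

/-- `U` is a connected component of `S`. -/
def IsCCOf {α : Type*} [TopologicalSpace α] (U S : Set α) : Prop :=
  ∃ x ∈ S, U = connectedComponentIn S x

/-- A set `A ⊆ 𝕋²` is bounded if all connected components of `π⁻¹(A)` are bounded in `ℝ²`. -/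
def BoundedLift (A : Set T2) : Prop :=
  ∀ x ∈ proj ⁻¹' A, Bornology.IsBounded (connectedComponentIn (proj ⁻¹' A) x)

/-- An open topological disk in `𝕋²`: an open set homeomorphic to the open unit disk. -/
def IsTopDisk (D : Set T2) : Prop :=
  IsOpen D ∧ Nonempty (D ≃ₜ (Metric.ball (0:ℂ) 1))

/-- `U ⊆ 𝕋²` contains a closed curve of homotopy type `v ∈ ℤ²`, i.e. there is a continuous
path `Γ` in `ℝ²` whose projection stays in `U` and whose endpoints differ by the
integer vector `v` (so that the projection is a loop of homotopy type `v`). -/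
def LoopOfType (U : Set T2) (v : ℤ × ℤ) : Prop :=
  ∃ Γ : C(ℝ, R2), (∀ t ∈ Icc (0:ℝ) 1, proj (Γ t) ∈ U) ∧ Γ 1 = Γ 0 + intVec v

/-- The subgroup of `π₁(𝕋²) ≅ ℤ²` generated by classes of loops contained in `U`. -/
def loopGroup (U : Set T2) : AddSubgroup (ℤ × ℤ) :=
  AddSubgroup.closure {v : ℤ × ℤ | LoopOfType U v}

/-- A homotopically trivial subset of `𝕋²`: every loop in `U` is trivial in `𝕋²`. -/
def TrivialSet (U : Set T2) : Prop := loopGroup U = ⊥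

/-- A doubly essential open connected subset of `𝕋²`: the classes of loops in `U`
generate all of `π₁(𝕋²) ≅ ℤ²`. -/
def IsDoublyEssential (U : Set T2) : Prop :=
  IsOpen U ∧ IsConnected U ∧ loopGroup U = ⊤

/-- An essential annulus in `𝕋²`: an open set homeomorphic to `𝕋¹ × ℝ` containing a
homotopically non-trivial closed curve of `𝕋²`. -/
def IsEssentialAnnulus (A : Set T2) : Prop :=
  IsOpen A ∧ Nonempty (A ≃ₜ Ann) ∧ ∃ v : ℤ × ℤ, v ≠ 0 ∧ LoopOfType A v

/-- A minimal set of `f`: non-empty, compact, `f`-invariant, and minimal with respect to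
inclusion among such sets. -/
def IsMinimalSet (f : T2 → T2) (M : Set T2) : Prop :=
  M.Nonempty ∧ IsCompact M ∧ f '' M = M ∧
    ∀ K : Set T2, K ⊆ M → K.Nonempty → IsCompact K → f '' K = K → K = M

/-- A set is periodic for `f` if some positive iterate of `f` maps it onto itself. -/
def IsPeriodicSet (f : T2 → T2) (U : Set T2) : Prop := ∃ n : ℕ, 1 ≤ n ∧ f^[n] '' U = U

/-- A subset of the annulus is unbounded above. -/
def UnbAbove (S : Set Ann) : Prop := ∀ r : ℝ, ∃ z ∈ S, r < z.2
/-- A subset of the annulus is unbounded below. -/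
def UnbBelow (S : Set Ann) : Prop := ∀ r : ℝ, ∃ z ∈ S, z.2 < r

/-- An annular continuum in `𝔸`: compact, connected, and its complement has exactly two
connected components, one unbounded below and the other unbounded above. -/
def IsAnnularContinuumAnn (C : Set Ann) : Prop :=
  IsCompact C ∧ IsConnected C ∧
    ∃ Um Up : Set Ann, IsCCOf Um Cᶜ ∧ IsCCOf Up Cᶜ ∧ Um ≠ Up ∧
      UnbBelow Um ∧ UnbAbove Up ∧ ∀ W, IsCCOf W Cᶜ → W = Um ∨ W = Up

/-- A circloid in `𝔸`: an annular continuum which is minimal with respect to inclusion. -/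
def IsCircloidAnn (C : Set Ann) : Prop :=
  IsAnnularContinuumAnn C ∧ ∀ C' ⊆ C, IsAnnularContinuumAnn C' → C' = C

/-- The homotopy type in `𝕋²` of a (closed) curve `g : ℝ → 𝕋²` (restricted to `[0,1]`),
computed through a lift to `ℝ²`. -/
def MapLoopOfType (g : ℝ → T2) (v : ℤ × ℤ) : Prop :=
  ∃ Γ : C(ℝ, R2), (∀ t ∈ Icc (0:ℝ) 1, proj (Γ t) = g t) ∧ Γ 1 = Γ 0 + intVec v

/-- A circloid in `𝕋²`: a set contained in an embedded open annulus `𝒜 ⊆ 𝕋²` whose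
preimage in `𝔸` is a circloid. -/
def IsCircloid (A : Set T2) : Prop :=
  ∃ φ : Ann → T2, IsOpenEmbedding φ ∧ A ⊆ range φ ∧ IsCircloidAnn (φ ⁻¹' A)

/-- An essential circloid in `𝕋²`: the essential loops of the surrounding embedded
annulus are homotopically non-trivial in `𝕋²`. -/
def IsEssentialCircloid (A : Set T2) : Prop :=
  ∃ φ : Ann → T2, IsOpenEmbedding φ ∧ A ⊆ range φ ∧ IsCircloidAnn (φ ⁻¹' A) ∧
    ∃ v : ℤ × ℤ, v ≠ 0 ∧ MapLoopOfType (fun t : ℝ => φ ((t : T1), 0)) v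

/-- A homotopically trivial circloid in `𝕋²`: the essential loops of the surrounding
embedded annulus are homotopically trivial in `𝕋²`. -/
def IsTrivialCircloid (A : Set T2) : Prop :=
  ∃ φ : Ann → T2, IsOpenEmbedding φ ∧ A ⊆ range φ ∧ IsCircloidAnn (φ ⁻¹' A) ∧
    MapLoopOfType (fun t : ℝ => φ ((t : T1), 0)) 0

/-- `(f, M)` is an extension of `(g, N)`: `g` is a homeomorphism with minimal set `N`, and
there is a continuous surjection `Φ`, homotopic to the identity, with `Φ ∘ f = g ∘ Φ` and
`Φ(M) = N`. -/
def IsExtensionOf (f : T2 → T2) (M : Set T2) (g : T2 → T2) (N : Set T2) : Prop :=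
  IsHomeomorph g ∧ IsMinimalSet g N ∧
    ∃ Φ : C(T2, T2), Function.Surjective Φ ∧ Φ.Homotopic (ContinuousMap.id T2) ∧
      (∀ x, Φ (f x) = g (Φ x)) ∧ Φ '' M = N

/-- A Cantor set: non-empty, compact, perfect and totally disconnected. -/
def IsCantorSet (N : Set T2) : Prop :=
  N.Nonempty ∧ IsCompact N ∧ Perfect N ∧ IsTotallyDisconnected N

/-- `M` is an extension of a Cantor set. -/
def ExtensionOfCantor (f : T2 → T2) (M : Set T2) : Prop :=
  ∃ g N, IsExtensionOf f M g N ∧ IsCantorSet N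

/-- `M` is an extension of a periodic orbit (a finite minimal set). -/
def ExtensionOfPeriodicOrbit (f : T2 → T2) (M : Set T2) : Prop :=
  ∃ g N, IsExtensionOf f M g N ∧ N.Finite

/-- Type 1: the complement of `M` is a disjoint union of topological disks. -/
def Type1 (M : Set T2) : Prop := ∀ U, IsCCOf U Mᶜ → IsTopDisk U

/-- Type 2: the complement of `M` is a disjoint union of at least one essential annulus
and topological disks. -/
def Type2 (M : Set T2) : Prop :=
  (∃ U, IsCCOf U Mᶜ ∧ IsEssentialAnnulus U) ∧
    ∀ U, IsCCOf U Mᶜ → IsTopDisk U ∨ IsEssentialAnnulus U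

/-- Type 3: the complement of `M` is a disjoint union of exactly one doubly essential
component and bounded topological disks. -/
def Type3 (M : Set T2) : Prop :=
  ∃ U, IsCCOf U Mᶜ ∧ IsDoublyEssential U ∧
    ∀ V, IsCCOf V Mᶜ → V = U ∨ (IsTopDisk V ∧ BoundedLift V)

/-- `f` is semi-conjugate to an irrational rotation of `𝕋¹`. -/
def SemiconjToIrrationalRotation (f : T2 → T2) : Prop :=
  ∃ h : C(T2, T1), Function.Surjective h ∧
    ∃ α : ℝ, Irrational α ∧ ∀ x, h (f x) = h x + (α : T1)

/-- `f` is non-wandering: no non-empty open set is disjoint from all its forward iterates. -/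
def NonWandering (f : T2 → T2) : Prop :=
  ¬ ∃ U : Set T2, IsOpen U ∧ U.Nonempty ∧ ∀ n : ℕ, 1 ≤ n → f^[n] '' U ∩ U = ∅

/-- The rotation set of a lift `F : ℝ² → ℝ²`. -/
def rotSet (F : R2 → R2) : Set R2 :=
  {ρ | ∃ (z : ℕ → R2) (n : ℕ → ℕ), StrictMono n ∧
    Tendsto (fun i => ((n i : ℝ))⁻¹ • (F^[n i] (z i) - z i)) atTop (nhds ρ)}


/-- A subset `A ⊆ 𝔸` is essential if no connected component of its complement is
unbounded both above and below. -/
def EssentialA (A : Set Ann) : Prop :=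
  ∀ z ∈ Aᶜ, ¬ (UnbAbove (connectedComponentIn Aᶜ z) ∧ UnbBelow (connectedComponentIn Aᶜ z))

/-- A subset of the annulus which is bounded above. -/
def BddAboveA (A : Set Ann) : Prop := ∃ r : ℝ, ∀ z ∈ A, z.2 ≤ r

/-- `𝒰⁺(A)`: the connected component of `𝔸 \ Cl(A)` which is unbounded above
(realised as the union of all such components, which is a single component under the
standing assumptions). -/
def Uplus (A : Set Ann) : Set Ann :=
  {z | z ∉ closure A ∧ UnbAbove (connectedComponentIn (closure A)ᶜ z)}

/-- `𝒰⁻(A)`: the connected component of `𝔸 \ Cl(A)` which is unbounded below. -/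
def Uminus (A : Set Ann) : Set Ann :=
  {z | z ∉ closure A ∧ UnbBelow (connectedComponentIn (closure A)ᶜ z)}

/-- The upper frontier `𝒞⁺(A) = 𝔸 \ (𝒰^{+-}(A) ∪ 𝒰^{+-+}(A))` of an essential set
bounded above; it is a circloid. -/
def CplusA (A : Set Ann) : Set Ann := (Uminus (Uplus A) ∪ Uplus (Uminus (Uplus A)))ᶜ

namespace IncEssAux

open Metric

lemma coe_dist_le (a b : ℝ) : dist (a : T1) (b : T1) ≤ dist a b := by
  rw [dist_eq_norm, dist_eq_norm, ← AddCircle.coe_sub, AddCircle.norm_eq, Real.norm_eq_abs]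
  simpa using round_le (a - b) 0

lemma continuous_coeT1 : Continuous (fun x : ℝ => (x : T1)) := AddCircle.continuous_mk' 1

/-- Every point of `Ann` has arbitrarily small connected open neighbourhoods. -/
lemma exists_nb (z : Ann) {r : ℝ} (hr : 0 < r) :
    ∃ B : Set Ann, IsOpen B ∧ IsPreconnected B ∧ z ∈ B ∧ B ⊆ Metric.ball z r := by
  obtain ⟨a, ha⟩ : ∃ a : ℝ, (a : T1) = z.1 := Quotient.exists_rep z.1
  refine ⟨((fun x : ℝ => (x : T1)) '' Metric.ball a r) ×ˢ Metric.ball z.2 r,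
    ((QuotientAddGroup.isOpenMap_coe _ isOpen_ball).prod isOpen_ball), ?_, ?_, ?_⟩
  · exact (((convex_ball a r).isPreconnected).image _ continuous_coeT1.continuousOn).prod
      ((convex_ball z.2 r).isPreconnected)
  · exact ⟨⟨a, mem_ball_self hr, ha⟩, mem_ball_self hr⟩
  · rintro ⟨w1, w2⟩ ⟨⟨c, hc, rfl⟩, h2⟩
    rw [mem_ball, Prod.dist_eq]
    refine max_lt (lt_of_le_of_lt ?_ hc) h2
    calc dist (c : T1) z.1 = dist (c : T1) (a : T1) := by rw [ha]
    _ ≤ dist c a := coe_dist_le c a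

/-- Connected components of open subsets of `Ann` are open. -/
lemma isOpen_ccIn {S : Set Ann} (hS : IsOpen S) (x : Ann) :
    IsOpen (connectedComponentIn S x) := by
  rw [isOpen_iff_mem_nhds]
  intro y hy
  have hyS : y ∈ S := connectedComponentIn_subset S x hy
  obtain ⟨r, hr, hball⟩ := Metric.isOpen_iff.1 hS y hyS
  obtain ⟨B, hBo, hBc, hyB, hBsub⟩ := exists_nb y hr
  have hBS : B ⊆ S := hBsub.trans hball
  have : B ⊆ connectedComponentIn S y := hBc.subset_connectedComponentIn hyB hBS
  rw [connectedComponentIn_eq hy]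
  exact Filter.mem_of_superset (hBo.mem_nhds hyB) this

/-- The lower tube. -/
lemma isPreconnected_tube (r : ℝ) : IsPreconnected {z : Ann | z.2 < r} := by
  have : {z : Ann | z.2 < r} = (univ : Set T1) ×ˢ Iio r := by
    ext z; simp [Set.mem_prod]
  rw [this]
  exact isPreconnected_univ.prod isPreconnected_Iio

lemma isPreconnected_utube (r : ℝ) : IsPreconnected {z : Ann | r < z.2} := by
  have : {z : Ann | r < z.2} = (univ : Set T1) ×ˢ Ioi r := by
    ext z; simp [Set.mem_prod]
  rw [this]
  exact isPreconnected_univ.prod isPreconnected_Ioi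

/-- Height bounds. -/
def sH (S : Set Ann) : ℝ := sSup (Prod.snd '' S)
def iH (S : Set Ann) : ℝ := sInf (Prod.snd '' S)

lemma le_sH {S : Set Ann} (hS : IsCompact S) {z : Ann} (hz : z ∈ S) : z.2 ≤ sH S :=
  le_csSup (hS.image continuous_snd).bddAbove ⟨z, hz, rfl⟩

lemma iH_le {S : Set Ann} (hS : IsCompact S) {z : Ann} (hz : z ∈ S) : iH S ≤ z.2 :=
  csInf_le (hS.image continuous_snd).bddBelow ⟨z, hz, rfl⟩

lemma exists_sH {S : Set Ann} (hS : IsCompact S) (hne : S.Nonempty) :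
    ∃ z ∈ S, z.2 = sH S := by
  have := (hS.image continuous_snd).sSup_mem (hne.image _)
  obtain ⟨z, hz, hz2⟩ := this
  exact ⟨z, hz, hz2⟩

/-- Points strictly below `iH E` belong to `Uminus E`. -/
lemma mem_Uminus_of_low {E : Set Ann} (hE : IsCompact E) {z : Ann}
    (hz : z.2 < iH E) : z ∈ Uminus E := by
  have hcl : closure E = E := hE.isClosed.closure_eq
  have hzE : z ∉ E := fun h => absurd (iH_le hE h) (not_le.2 hz)
  have htube : {w : Ann | w.2 < iH E} ⊆ (closure E)ᶜ := by
    intro w hw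
    rw [hcl]
    exact fun h => absurd (iH_le hE h) (not_le.2 hw)
  have hsub : {w : Ann | w.2 < iH E} ⊆ connectedComponentIn (closure E)ᶜ z :=
    (isPreconnected_tube (iH E)).subset_connectedComponentIn hz htube
  refine ⟨by rw [hcl]; exact hzE, fun r => ?_⟩
  refine ⟨((0 : T1), min r (iH E) - 1), hsub ?_, ?_⟩
  · show min r (iH E) - 1 < iH E
    have := min_le_right r (iH E); linarith
  · show min r (iH E) - 1 < r
    have := min_le_left r (iH E); linarith

end IncEssAux

namespace IncEssAux2
open Metric IncEssAux

/-- base point below `E`. -/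
def pE (E : Set Ann) : Ann := ((0 : T1), iH E - 1)

lemma pE_low (E : Set Ann) : (pE E).2 < iH E := by simp [pE]

lemma pE_mem {E : Set Ann} (hE : IsCompact E) : pE E ∈ Uminus E :=
  mem_Uminus_of_low hE (pE_low E)

/-- `Uminus E` is exactly the connected component of the base point. -/
lemma Uminus_eq_ccIn {E : Set Ann} (hE : IsCompact E) :
    Uminus E = connectedComponentIn (closure E)ᶜ (pE E) := by
  have hcl : closure E = E := hE.isClosed.closure_eq
  have htubesub : ∀ w : Ann, w.2 < iH E → {v : Ann | v.2 < iH E} ⊆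
      connectedComponentIn (closure E)ᶜ w := by
    intro w hw
    refine (isPreconnected_tube (iH E)).subset_connectedComponentIn hw ?_
    intro v hv
    rw [hcl]
    exact fun h => absurd (iH_le hE h) (not_le.2 hv)
  ext z
  constructor
  · rintro ⟨hz1, hz2⟩
    obtain ⟨w, hw, hw2⟩ := hz2 (iH E)
    -- w ∈ comp z with w.2 < iH E
    have h1 : connectedComponentIn (closure E)ᶜ z = connectedComponentIn (closure E)ᶜ w :=
      connectedComponentIn_eq hw
    have h2 : pE E ∈ connectedComponentIn (closure E)ᶜ w := htubesub w hw2 (pE_low E)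
    have h3 : connectedComponentIn (closure E)ᶜ w = connectedComponentIn (closure E)ᶜ (pE E) :=
      connectedComponentIn_eq h2
    rw [← h3, ← h1]
    exact mem_connectedComponentIn hz1
  · intro hz
    have hzc : z ∈ (closure E)ᶜ := connectedComponentIn_subset _ _ hz
    refine ⟨hzc, ?_⟩
    have h1 : connectedComponentIn (closure E)ᶜ (pE E) = connectedComponentIn (closure E)ᶜ z :=
      connectedComponentIn_eq hz
    intro r
    refine ⟨((0:T1), min r (iH E) - 1), ?_, ?_⟩
    · rw [← h1]
      refine htubesub (pE E) (pE_low E) ?_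
      show min r (iH E) - 1 < iH E
      have := min_le_right r (iH E); linarith
    · show min r (iH E) - 1 < r
      have := min_le_left r (iH E); linarith

lemma Uminus_isOpen {E : Set Ann} (hE : IsCompact E) : IsOpen (Uminus E) := by
  rw [Uminus_eq_ccIn hE]
  exact isOpen_ccIn (isClosed_closure (s := E)).isOpen_compl _

lemma Uminus_isPreconnected {E : Set Ann} (hE : IsCompact E) : IsPreconnected (Uminus E) := by
  rw [Uminus_eq_ccIn hE]
  exact isPreconnected_connectedComponentIn

lemma Uminus_disjoint {E : Set Ann} (hE : IsCompact E) : ∀ z ∈ Uminus E, z ∉ E := by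
  intro z hz
  rw [Uminus_eq_ccIn hE] at hz
  have := connectedComponentIn_subset (closure E)ᶜ (pE E) hz
  rw [hE.isClosed.closure_eq] at this
  exact this

/-- Maximality: a preconnected subset of `Eᶜ` meeting `Uminus E` lies in `Uminus E`. -/
lemma subset_Uminus {E C : Set Ann} (hE : IsCompact E) (hC : IsPreconnected C)
    (hCE : ∀ z ∈ C, z ∉ E) (hint : (C ∩ Uminus E).Nonempty) : C ⊆ Uminus E := by
  have hcl : closure E = E := hE.isClosed.closure_eq
  obtain ⟨w, hwC, hwU⟩ := hint
  rw [Uminus_eq_ccIn hE] at hwU ⊢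
  have h1 : connectedComponentIn (closure E)ᶜ (pE E) = connectedComponentIn (closure E)ᶜ w :=
    connectedComponentIn_eq hwU
  rw [h1]
  refine hC.subset_connectedComponentIn hwC ?_
  intro v hv
  rw [hcl]
  exact hCE v hv

/-- Essentialness bounds `Uminus E` above by the top height of `E`. -/
lemma Uminus_lt_sH {E : Set Ann} (hE : IsCompact E) (hne : E.Nonempty)
    (hess : EssentialA E) : ∀ z ∈ Uminus E, z.2 < sH E := by
  intro z hz
  by_contra hge
  push_neg at hge
  have hcl : closure E = E := hE.isClosed.closure_eq
  obtain ⟨hz1, hz2⟩ := hz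
  rw [hcl] at hz1 hz2
  -- find a point of the component strictly above sH E
  have hopen : IsOpen (connectedComponentIn Eᶜ z) := isOpen_ccIn hE.isClosed.isOpen_compl z
  have hzmem : z ∈ connectedComponentIn Eᶜ z := mem_connectedComponentIn hz1
  obtain ⟨r, hr, hball⟩ := Metric.isOpen_iff.1 hopen z hzmem
  have hwmem : (z.1, z.2 + r / 2) ∈ connectedComponentIn Eᶜ z := by
    apply hball
    rw [mem_ball, Prod.dist_eq]
    simp only [dist_self]
    rw [Real.dist_eq]
    have : |z.2 + r/2 - z.2| = r/2 := by
      rw [show z.2 + r/2 - z.2 = r/2 by ring]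
      exact abs_of_pos (by linarith)
    rw [this]
    simp only [max_lt_iff]
    constructor <;> linarith
  -- the upper tube is included in the component
  have hut : {v : Ann | sH E < v.2} ⊆ connectedComponentIn Eᶜ z := by
    have h1 : connectedComponentIn Eᶜ z = connectedComponentIn Eᶜ (z.1, z.2 + r/2) :=
      connectedComponentIn_eq hwmem
    rw [h1]
    refine (isPreconnected_utube (sH E)).subset_connectedComponentIn ?_ ?_
    · show sH E < z.2 + r/2; linarith
    · intro v hv
      exact fun h => absurd (le_sH hE h) (not_le.2 hv)
  refine hess z hz1 ⟨fun s => ?_, hz2⟩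
  exact ⟨((0:T1), max s (sH E) + 1), hut (by
      show sH E < max s (sH E) + 1
      have := le_max_right s (sH E); linarith), by
      show s < max s (sH E) + 1
      have := le_max_left s (sH E); linarith⟩

/-- Strict height comparison. -/
lemma sH_lt {E F : Set Ann} (hE : IsCompact E) (hEne : E.Nonempty) (hEess : EssentialA E)
    (hF : IsCompact F) (hFne : F.Nonempty) (h : F ⊆ Uminus E) : sH F < sH E := by
  obtain ⟨z, hz, hz2⟩ := exists_sH hF hFne
  rw [← hz2]
  exact Uminus_lt_sH hE hEne hEess z (h hz)

/-- Monotonicity of `Uminus` along `≺`. -/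
lemma Uminus_mono {E F : Set Ann} (hE : IsCompact E) (hEne : E.Nonempty)
    (hEess : EssentialA E)     (hF : IsCompact F) (hFne : F.Nonempty) (hFess : EssentialA F) (hFconn : IsPreconnected F)
    (h : E ⊆ Uminus F) : Uminus E ⊆ Uminus F := by
  -- E and F are disjoint
  have hEF : ∀ z ∈ E, z ∉ F := fun z hz => Uminus_disjoint hF _ (h hz)
  -- Uminus E misses F
  have hUF : ∀ z ∈ Uminus E, z ∉ F := by
    intro z hz hzF
    have hFsub : F ⊆ Uminus E :=
      subset_Uminus hE hFconn (fun v hv hvE => hEF v hvE hv) ⟨z, hzF, hz⟩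
    have h1 : sH F < sH E := sH_lt hE hEne hEess hF hFne hFsub
    have h2 : sH E < sH F := sH_lt hF hFne hFess hE hEne h
    linarith
  -- now transfer
  refine subset_Uminus hF (Uminus_isPreconnected hE) hUF ?_
  refine ⟨((0:T1), min (iH E) (iH F) - 1), ?_, ?_⟩
  · refine mem_Uminus_of_low hE ?_
    show min (iH E) (iH F) - 1 < iH E
    have := min_le_left (iH E) (iH F); linarith
  · refine mem_Uminus_of_low hF ?_
    show min (iH E) (iH F) - 1 < iH F
    have := min_le_right (iH E) (iH F); linarith

end IncEssAux2

open IncEssAux IncEssAux2 Metric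

/-- A bounded increasing (with respect to `≺`) sequence of essential continua in `𝔸`
converges in Hausdorff distance to the essential continuum `∂𝒰⁻`, where
`𝒰⁻ = ⋃ₙ 𝒰⁻(Eₙ)`. -/
theorem increasing_essential_continua_limit
    (E : ℕ → Set Ann)
    (hcont : ∀ n, IsCompact (E n) ∧ IsConnected (E n) ∧ EssentialA (E n))
    (hbd : ∃ Elo Ehi : Set Ann,
      (IsCompact Elo ∧ IsConnected Elo ∧ EssentialA Elo) ∧
      (IsCompact Ehi ∧ IsConnected Ehi ∧ EssentialA Ehi) ∧
      ∀ n, Elo ⊆ Uminus (E n) ∧ E n ⊆ Uminus Ehi)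
    (hmono : ∀ n, E n ⊆ Uminus (E (n + 1))) :
    (IsCompact (frontier (⋃ n, Uminus (E n))) ∧
      IsConnected (frontier (⋃ n, Uminus (E n))) ∧
      EssentialA (frontier (⋃ n, Uminus (E n)))) ∧
    Tendsto (fun n => Metric.hausdorffDist (E n) (frontier (⋃ m, Uminus (E m))))
      atTop (nhds 0) := by
  classical
  obtain ⟨Elo, Ehi, _, ⟨hhiC, hhiConn, hhiEss⟩, hbds⟩ := hbd
  have hcomp : ∀ n, IsCompact (E n) := fun n => (hcont n).1
  have hne : ∀ n, (E n).Nonempty := fun n => (hcont n).2.1.nonempty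
  have hessE : ∀ n, EssentialA (E n) := fun n => (hcont n).2.2
  have hhiNe : Ehi.Nonempty := hhiConn.nonempty
  set U : Set Ann := ⋃ n, Uminus (E n) with hUdef
  -- monotonicity of the chain
  have mono : ∀ m n, m ≤ n → Uminus (E m) ⊆ Uminus (E n) := by
    intro m n hmn
    induction n, hmn using Nat.le_induction with
    | base => exact subset_rfl
    | succ n hmn ih =>
      refine ih.trans ?_
      exact Uminus_mono (hcomp n) (hne n) (hessE n) (hcomp (n+1)) (hne (n+1))
        (hessE (n+1)) (hcont (n+1)).2.1.isPreconnected (hmono n)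
  have hEU : ∀ n, E n ⊆ U := fun n =>
    (hmono n).trans (subset_iUnion (fun m => Uminus (E m)) (n+1))
  have hUopen : IsOpen U := isOpen_iUnion (fun n => Uminus_isOpen (hcomp n))
  -- upper bound
  set R : ℝ := sH Ehi with hRdef
  have hUlt : ∀ z ∈ U, z.2 < R := by
    intro z hz
    obtain ⟨n, hzn⟩ := mem_iUnion.1 hz
    have h1 : z.2 < sH (E n) := Uminus_lt_sH (hcomp n) (hne n) (hessE n) z hzn
    have h2 : sH (E n) < R := sH_lt hhiC hhiNe hhiEss (hcomp n) (hne n) (hbds n).2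
    linarith
  -- lower bound
  set c : ℝ := iH (E 0) with hcdef
  have htube : ∀ z : Ann, z.2 < c → z ∈ U := fun z hz =>
    mem_iUnion.2 ⟨0, mem_Uminus_of_low (hcomp 0) hz⟩
  -- frontier basics
  set F : Set Ann := frontier U with hFdef
  have hFeq : F = closure U \ U := by rw [hFdef, frontier, hUopen.interior_eq]
  have hFclosed : IsClosed F := isClosed_frontier
  have hclUle : ∀ z ∈ closure U, z.2 ≤ R := by
    have : closure U ⊆ {z : Ann | z.2 ≤ R} :=
      closure_minimal (fun z hz => le_of_lt (hUlt z hz))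
        (isClosed_le continuous_snd continuous_const)
    exact fun z hz => this hz
  have hFsub : F ⊆ (univ : Set T1) ×ˢ Icc c R := by
    intro z hz
    rw [hFeq] at hz
    refine ⟨mem_univ _, ⟨?_, hclUle z hz.1⟩⟩
    by_contra hlt
    exact hz.2 (htube z (not_le.1 hlt))
  have hFcomp : IsCompact F :=
    ((isCompact_univ.prod isCompact_Icc).of_isClosed_subset hFclosed hFsub)
  have hFne : F.Nonempty := by
    rw [nonempty_iff_ne_empty]
    intro hemp
    have : U = ∅ ∨ U = univ := frontier_eq_empty_iff.1 hemp
    rcases this with h | h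
    · have : ((0:T1), c - 1) ∈ U := htube _ (by norm_num)
      rw [h] at this; exact this
    · have : ((0:T1), R) ∈ U := h ▸ mem_univ _
      exact lt_irrefl R (hUlt _ this)
  -- Part A : eventually E n is close to F
  have partA : ∀ ε : ℝ, 0 < ε → ∃ N, ∀ n ≥ N, ∀ y ∈ E n, ∃ x ∈ F, dist y x ≤ ε := by
    intro ε hε
    set K : Set Ann := closure U ∩ {z | ε ≤ infDist z F} ∩ {z | c ≤ z.2} with hKdef
    have hKclosed : IsClosed K :=
      ((isClosed_closure.inter (isClosed_le continuous_const (continuous_infDist_pt F))).inter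
        (isClosed_le continuous_const continuous_snd))
    have hKsub : K ⊆ (univ : Set T1) ×ˢ Icc c R := by
      rintro z ⟨⟨hz1, _⟩, hz3⟩
      exact ⟨mem_univ _, hz3, hclUle z hz1⟩
    have hKcomp : IsCompact K :=
      (isCompact_univ.prod isCompact_Icc).of_isClosed_subset hKclosed hKsub
    have hKU : K ⊆ ⋃ n, Uminus (E n) := by
      rintro z ⟨⟨hz1, hz2⟩, _⟩
      have hzF : z ∉ F := by
        intro hzF
        have h0 : ε ≤ infDist z F := hz2
        rw [infDist_zero_of_mem hzF] at h0; linarith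
      have : z ∈ U := by
        rw [hFeq] at hzF
        by_contra hzU
        exact hzF ⟨hz1, hzU⟩
      exact this
    obtain ⟨t, ht⟩ := hKcomp.elim_finite_subcover (fun n => Uminus (E n))
      (fun n => Uminus_isOpen (hcomp n)) hKU
    obtain ⟨N, hN⟩ : ∃ N, ∀ i ∈ t, i ≤ N := ⟨t.sup id, fun i hi => Finset.le_sup (f := id) hi⟩
    have hKN : K ⊆ Uminus (E N) := by
      intro z hz
      obtain ⟨i, hi, hzi⟩ := mem_iUnion₂.1 (ht hz)
      exact mono i N (hN i hi) hzi
    refine ⟨N, fun n hn y hy => ?_⟩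
    by_contra hno
    push_neg at hno
    have hyF : ε ≤ infDist y F := by
      by_contra hlt
      obtain ⟨x, hx, hdx⟩ := (infDist_lt_iff hFne).1 (not_le.1 hlt)
      exact absurd (le_of_lt hdx) (not_le.2 (hno x hx))
    have hyU : y ∉ Uminus (E n) := by
      intro hyu
      exact Uminus_disjoint (hcomp n) y hyu hy
    rcases lt_or_ge y.2 c with hc | hc
    · exact hyU (mono 0 n (Nat.zero_le n) (mem_Uminus_of_low (hcomp 0) hc))
    · have hyK : y ∈ K := ⟨⟨subset_closure (hEU n hy), hyF⟩, hc⟩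
      exact hyU (mono N n hn (hKN hyK))
  -- Part B : eventually F is close to E n
  have partB : ∀ ε : ℝ, 0 < ε → ∃ N, ∀ n ≥ N, ∀ x ∈ F, ∃ y ∈ E n, dist x y ≤ ε := by
    intro ε hε
    have hδ : 0 < ε / 2 := by linarith
    -- pointwise statement
    have key : ∀ x ∈ F, ∃ m, ∀ n ≥ m, ∃ y ∈ E n, dist x y ≤ ε / 2 := by
      intro x hx
      obtain ⟨B, hBo, hBc, hxB, hBsub⟩ := exists_nb x hδ
      have hxcl : x ∈ closure U := by rw [hFeq] at hx; exact hx.1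
      have hBU : (B ∩ U).Nonempty := by
        have := mem_closure_iff.1 hxcl B hBo hxB
        exact this
      obtain ⟨w, hwB, hwU⟩ := hBU
      obtain ⟨m, hwm⟩ := mem_iUnion.1 hwU
      refine ⟨m, fun n hn => ?_⟩
      by_contra hno
      push_neg at hno
      have hBE : ∀ z ∈ B, z ∉ E n := by
        intro z hzB hzE
        have : dist x z ≤ ε / 2 := le_of_lt (by
          have := hBsub hzB
          rw [mem_ball] at this
          rw [dist_comm]; exact this)
        exact absurd this (not_le.2 (hno z hzE))
      have hBsubU : B ⊆ Uminus (E n) :=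
        subset_Uminus (hcomp n) hBc hBE ⟨w, hwB, mono m n hn hwm⟩
      have hxU : x ∈ U := mem_iUnion.2 ⟨n, hBsubU hxB⟩
      rw [hFeq] at hx
      exact hx.2 hxU
    -- uniformize using compactness
    set P : Ann → ℕ → Prop := fun x m => ∀ n ≥ m, ∃ y ∈ E n, dist x y ≤ ε / 2 with hPdef
    set φ : Ann → ℕ := fun x => if h : ∃ m, P x m then h.choose else 0 with hφdef
    have hφspec : ∀ x ∈ F, P x (φ x) := by
      intro x hx
      have h : ∃ m, P x m := key x hx
      simp only [hφdef, dif_pos h]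
      exact h.choose_spec
    obtain ⟨t, htF, htcov⟩ := hFcomp.elim_nhds_subcover (fun x => Metric.ball x (ε / 2))
      (fun x _ => Metric.ball_mem_nhds x hδ)
    refine ⟨t.sup φ, fun n hn x hx => ?_⟩
    obtain ⟨x₀, hx₀t, hxball⟩ := mem_iUnion₂.1 (htcov hx)
    have hx₀F : x₀ ∈ F := htF x₀ hx₀t
    have hφx₀ : φ x₀ ≤ t.sup φ := Finset.le_sup hx₀t
    obtain ⟨y, hy, hdy⟩ := hφspec x₀ hx₀F n (le_trans hφx₀ hn)
    refine ⟨y, hy, ?_⟩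
    calc dist x y ≤ dist x x₀ + dist x₀ y := dist_triangle _ _ _
    _ ≤ ε / 2 + ε / 2 := add_le_add (le_of_lt (mem_ball.1 hxball)) hdy
    _ = ε := by ring
  -- Hausdorff convergence
  have hconv : Tendsto (fun n => Metric.hausdorffDist (E n) F) atTop (nhds 0) := by
    rw [Metric.tendsto_atTop]
    intro ε hε
    have hε2 : 0 < ε / 2 := by linarith
    obtain ⟨N₁, hN₁⟩ := partA (ε / 2) hε2
    obtain ⟨N₂, hN₂⟩ := partB (ε / 2) hε2
    refine ⟨max N₁ N₂, fun n hn => ?_⟩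
    have h1 : hausdorffDist (E n) F ≤ ε / 2 := by
      refine hausdorffDist_le_of_mem_dist (le_of_lt hε2) ?_ ?_
      · exact fun y hy => hN₁ n (le_trans (le_max_left _ _) hn) y hy
      · intro x hx
        obtain ⟨y, hy, hd⟩ := hN₂ n (le_trans (le_max_right _ _) hn) x hx
        exact ⟨y, hy, hd⟩
    rw [Real.dist_eq, sub_zero, abs_of_nonneg hausdorffDist_nonneg]
    linarith
  -- connectedness of F
  have hFpre : IsPreconnected F := by
    rw [isPreconnected_iff_subset_of_fully_disjoint_closed hFclosed]
    intro u v hu hv hcover hdisj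
    by_contra hno
    push_neg at hno
    obtain ⟨hnu, hnv⟩ := hno
    have hA : (F ∩ u).Nonempty := by
      obtain ⟨x, hxF, hxv⟩ := not_subset.1 hnv
      rcases hcover hxF with h | h
      · exact ⟨x, hxF, h⟩
      · exact absurd h hxv
    have hB : (F ∩ v).Nonempty := by
      obtain ⟨x, hxF, hxu⟩ := not_subset.1 hnu
      rcases hcover hxF with h | h
      · exact absurd h hxu
      · exact ⟨x, hxF, h⟩
    set A : Set Ann := F ∩ u with hAdef
    set B : Set Ann := F ∩ v with hBdef
    have hAcomp : IsCompact A := hFcomp.inter_right hu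
    have hBcomp : IsCompact B := hFcomp.inter_right hv
    -- minimal distance
    obtain ⟨p, hp, hpmin⟩ := (hAcomp.prod hBcomp).exists_isMinOn (hA.prod hB)
      continuous_dist.continuousOn
    set d : ℝ := dist p.1 p.2 with hddef
    have hdpos : 0 < d := by
      rw [hddef, dist_pos]
      intro hpq
      have h1 : p.1 ∈ u := hp.1.2
      have h2 : p.2 ∈ v := hp.2.2
      rw [hpq] at h1
      exact absurd (hdisj.ne_of_mem h1 h2) (by simp)
    have hd4 : 0 < d / 4 := by linarith
    obtain ⟨N₁, hN₁⟩ := partA (d / 4) hd4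
    obtain ⟨N₂, hN₂⟩ := partB (d / 4) hd4
    set n : ℕ := max N₁ N₂ with hndef
    set u' : Set Ann := {y | infDist y A ≤ d / 4} with hu'def
    set v' : Set Ann := {y | infDist y B ≤ d / 4} with hv'def
    have hu'closed : IsClosed u' := isClosed_le (continuous_infDist_pt A) continuous_const
    have hv'closed : IsClosed v' := isClosed_le (continuous_infDist_pt B) continuous_const
    have hdisj' : Disjoint u' v' := by
      rw [Set.disjoint_left]
      intro y hyu hyv
      obtain ⟨a, ha, hda⟩ := hAcomp.exists_infDist_eq_dist hA y
      obtain ⟨b, hb, hdb⟩ := hBcomp.exists_infDist_eq_dist hB y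
      have h1 : dist y a ≤ d / 4 := by rw [← hda]; exact hyu
      have h2 : dist y b ≤ d / 4 := by rw [← hdb]; exact hyv
      have h3 : dist a b ≤ d / 2 := by
        calc dist a b ≤ dist a y + dist y b := dist_triangle _ _ _
        _ ≤ d / 4 + d / 4 := add_le_add (by rw [dist_comm]; exact h1) h2
        _ = d / 2 := by ring
      have h4 := isMinOn_iff.1 hpmin _ (Set.mk_mem_prod ha hb)
      dsimp only at h4
      rw [← hddef] at h4
      linarith
    have hcov' : E n ⊆ u' ∪ v' := by
      intro y hy
      obtain ⟨x, hxF, hdx⟩ := hN₁ n (le_max_left _ _) y hy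
      rcases hcover hxF with h | h
      · exact Or.inl (le_trans (infDist_le_dist_of_mem (s := A) (x := y) ⟨hxF, h⟩) hdx)
      · exact Or.inr (le_trans (infDist_le_dist_of_mem (s := B) (x := y) ⟨hxF, h⟩) hdx)
    have hEn : IsPreconnected (E n) := (hcont n).2.1.isPreconnected
    have := (isPreconnected_iff_subset_of_fully_disjoint_closed (hcomp n).isClosed).1 hEn
      u' v' hu'closed hv'closed hcov' hdisj'
    rcases this with h | h
    · obtain ⟨b₀, hb₀F, hb₀v⟩ := hB
      obtain ⟨y, hy, hdy⟩ := hN₂ n (le_max_right _ _) b₀ hb₀F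
      have hyv' : y ∈ v' := le_trans (infDist_le_dist_of_mem (s := B) (x := y) ⟨hb₀F, hb₀v⟩) (by rw [dist_comm]; exact hdy)
      exact Set.disjoint_left.1 hdisj' (h hy) hyv'
    · obtain ⟨a₀, ha₀F, ha₀u⟩ := hA
      obtain ⟨y, hy, hdy⟩ := hN₂ n (le_max_right _ _) a₀ ha₀F
      have hyu' : y ∈ u' := le_trans (infDist_le_dist_of_mem (s := A) (x := y) ⟨ha₀F, ha₀u⟩) (by rw [dist_comm]; exact hdy)
      exact Set.disjoint_left.1 hdisj' hyu' (h hy)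
  -- essentialness of F
  have hFess : EssentialA F := by
    intro z hz ⟨hab, hbe⟩
    have hcompl : Fᶜ = U ∪ (closure U)ᶜ := by
      ext w
      rw [hFeq]
      simp only [mem_compl_iff, mem_diff, not_and, not_not, mem_union]
      constructor
      · intro h
        by_cases hw : w ∈ closure U
        · exact Or.inl (h hw)
        · exact Or.inr hw
      · rintro (h | h)
        · exact fun _ => h
        · exact fun hcl => absurd hcl h
    have hsub : connectedComponentIn Fᶜ z ⊆ U ∪ (closure U)ᶜ := by
      rw [← hcompl]; exact connectedComponentIn_subset _ _
    have hpre : IsPreconnected (connectedComponentIn Fᶜ z) := isPreconnected_connectedComponentIn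
    have hdisj2 : Disjoint U (closure U)ᶜ :=
      Set.disjoint_left.2 (fun w hw hwc => hwc (subset_closure hw))
    rcases hpre.subset_or_subset hUopen isClosed_closure.isOpen_compl hdisj2 hsub with h | h
    · obtain ⟨w, hw, hwr⟩ := hab R
      exact absurd (hUlt w (h hw)) (not_lt.2 (le_of_lt hwr))
    · obtain ⟨w, hw, hwr⟩ := hbe c
      exact (h hw) (subset_closure (htube w hwr))
  exact ⟨⟨hFcomp, ⟨hFne, hFpre⟩, hFess⟩, hconv⟩

end
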